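/- The restriction map from the space of entire functions H(ℂ) (with the compact-open topology) to C[a,b] (with the sup norm), f ↦ f|_{[a,b]}, is continuous and has dense range, and it intertwines the differentiation operators: (f|_{[a,b]})' = f'|_{[a,b]}. Consequently, the image of any hypercyclic vector for differentiation on H(ℂ) is hypercyclic for differentiation on C([a,b],ℂ). -/

import Mathlib

open Filter

lemma entire_iteratedDeriv {f : ℂ → ℂ} (hf : Differentiable ℂ f) (k : ℕ) :
    Differentiable ℂ (iteratedDeriv k f) := by
  have h := (Complex.analyticOnNhd_univ_iff_differentiable.mpr hf).iterated_deriv k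
  rw [← differentiableOn_univ, iteratedDeriv_eq_iterate]
  exact h.differentiableOn

/-- The restriction map `H(ℂ) → C([a,b],ℂ)`, `f ↦ f|_{[a,b]}`, is continuous (uniform
convergence on compacts implies uniform convergence on `[a,b]`), has dense range,
intertwines differentiation, and consequently maps hypercyclic vectors of `D` on
`H(ℂ)` to hypercyclic vectors of `D` on `C([a,b],ℂ)`. -/
theorem stmt_19 (a b : ℝ) (hab : a < b) :
    -- continuity of the restriction map
    (∀ (F : ℕ → ℂ → ℂ) (f : ℂ → ℂ), (∀ i, Differentiable ℂ (F i)) →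
      Differentiable ℂ f →
      (∀ K : Set ℂ, IsCompact K → TendstoUniformlyOn (fun i => F i) f atTop K) →
      TendstoUniformlyOn (fun i (x : ℝ) => F i x) (fun x : ℝ => f x) atTop
        (Set.Icc a b)) ∧
    -- dense range
    Dense {g : C(Set.Icc a b, ℂ) |
      ∃ f : ℂ → ℂ, Differentiable ℂ f ∧ ∀ x : Set.Icc a b, g x = f (x : ℝ)} ∧
    -- intertwining of differentiation
    (∀ f : ℂ → ℂ, Differentiable ℂ f → ∀ x ∈ Set.Icc a b,
      derivWithin (fun t : ℝ => f t) (Set.Icc a b) x = deriv f x) ∧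
    -- hypercyclic vectors are mapped to hypercyclic vectors
    (∀ f : ℂ → ℂ, Differentiable ℂ f →
      (∀ g : ℂ → ℂ, Differentiable ℂ g → ∀ K : Set ℂ, IsCompact K → ∀ ε > 0,
        ∃ k : ℕ, ∀ z ∈ K, ‖iteratedDeriv k f z - g z‖ < ε) →
      Dense {g : C(Set.Icc a b, ℂ) |
        ∃ k : ℕ, ∀ x : Set.Icc a b, g x = iteratedDeriv k f (x : ℝ)}) := by
  have hKc : IsCompact ((fun x : ℝ => (x : ℂ)) '' Set.Icc a b) :=
    isCompact_Icc.image Complex.continuous_ofReal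
  -- dense range, proved first for reuse
  have hdense : Dense {g : C(Set.Icc a b, ℂ) |
      ∃ f : ℂ → ℂ, Differentiable ℂ f ∧ ∀ x : Set.Icc a b, g x = f (x : ℝ)} := by
    rw [Metric.dense_iff]
    intro g ε hε
    -- split into real and imaginary parts
    set g₁ : C(Set.Icc a b, ℝ) := ⟨fun x => (g x).re, (Complex.continuous_re).comp g.continuous⟩
    set g₂ : C(Set.Icc a b, ℝ) := ⟨fun x => (g x).im, (Complex.continuous_im).comp g.continuous⟩
    obtain ⟨p, hp⟩ := exists_polynomial_near_continuousMap a b g₁ (ε/4) (by linarith)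
    obtain ⟨q, hq⟩ := exists_polynomial_near_continuousMap a b g₂ (ε/4) (by linarith)
    set P : Polynomial ℂ := p.map (algebraMap ℝ ℂ) + Polynomial.C Complex.I * q.map (algebraMap ℝ ℂ)
    set f : ℂ → ℂ := fun z => P.eval z
    have hfd : Differentiable ℂ f := P.differentiable
    set h : C(Set.Icc a b, ℂ) := ⟨fun x => f (x : ℝ), by fun_prop⟩
    refine ⟨h, Metric.mem_ball.mpr ?_, f, hfd, fun x => rfl⟩
    rw [ContinuousMap.dist_lt_iff hε]
    intro x
    have hval : f (x : ℝ) = Complex.ofReal (p.eval (x : ℝ)) +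
        Complex.I * Complex.ofReal (q.eval (x : ℝ)) := by
      simp only [f, P, Polynomial.eval_add, Polynomial.eval_mul, Polynomial.eval_C,
        Polynomial.eval_map]
      rw [show ((x : ℝ) : ℂ) = algebraMap ℝ ℂ (x : ℝ) from rfl,
        Polynomial.eval₂_at_apply, Polynomial.eval₂_at_apply]
      rfl
    have h1 : |p.eval (x : ℝ) - (g x).re| < ε/4 := by
      have := (p.toContinuousMapOn (Set.Icc a b) - g₁).norm_coe_le_norm x
      simp only [ContinuousMap.sub_apply, Polynomial.toContinuousMapOn_apply,
        Polynomial.toContinuousMap_apply] at this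
      calc |p.eval (x : ℝ) - (g x).re| ≤ ‖p.toContinuousMapOn (Set.Icc a b) - g₁‖ := this
        _ < ε/4 := hp
    have h2 : |q.eval (x : ℝ) - (g x).im| < ε/4 := by
      have := (q.toContinuousMapOn (Set.Icc a b) - g₂).norm_coe_le_norm x
      simp only [ContinuousMap.sub_apply, Polynomial.toContinuousMapOn_apply,
        Polynomial.toContinuousMap_apply] at this
      calc |q.eval (x : ℝ) - (g x).im| ≤ ‖q.toContinuousMapOn (Set.Icc a b) - g₂‖ := this
        _ < ε/4 := hq
    have : h x - g x = Complex.ofReal (p.eval (x : ℝ) - (g x).re) +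
        Complex.I * Complex.ofReal (q.eval (x : ℝ) - (g x).im) := by
      simp [Complex.ext_iff, h, hval]
    rw [dist_eq_norm, this]
    calc ‖Complex.ofReal (p.eval (x : ℝ) - (g x).re) +
        Complex.I * Complex.ofReal (q.eval (x : ℝ) - (g x).im)‖
        ≤ ‖Complex.ofReal (p.eval (x : ℝ) - (g x).re)‖ +
          ‖Complex.I * Complex.ofReal (q.eval (x : ℝ) - (g x).im)‖ := norm_add_le _ _
      _ = |p.eval (x : ℝ) - (g x).re| + |q.eval (x : ℝ) - (g x).im| := by
          simp [← Complex.ofReal_sub, norm_mul, Complex.norm_real]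
      _ < ε/4 + ε/4 := add_lt_add h1 h2
      _ < ε := by linarith
  refine ⟨?_, hdense, ?_, ?_⟩
  · intro F f _ _ hK
    have h := (hK _ hKc).comp (fun x : ℝ => (x : ℂ))
    exact h.mono (Set.subset_preimage_image _ _)
  · intro f hf x hx
    have h1 : HasDerivAt (fun t : ℝ => f t) (deriv f x) x :=
      (hf (x : ℂ)).hasDerivAt.comp_ofReal
    exact h1.hasDerivWithinAt.derivWithin (uniqueDiffOn_Icc hab x hx)
  · intro f hf hhyp
    rw [Metric.dense_iff]
    intro g ε hε
    obtain ⟨h, hball, u, hu, hgu⟩ := Metric.dense_iff.mp hdense g (ε/2) (by linarith)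
    obtain ⟨k, hk⟩ := hhyp u hu _ hKc (ε/2) (by linarith)
    have hcont : Continuous fun x : Set.Icc a b => iteratedDeriv k f (x : ℝ) := by
      have := (entire_iteratedDeriv hf k).continuous
      fun_prop
    refine ⟨⟨_, hcont⟩, Metric.mem_ball.mpr ?_, k, fun x => rfl⟩
    rw [ContinuousMap.dist_lt_iff hε]
    intro x
    simp only [ContinuousMap.coe_mk]
    have hx : ((x : ℝ) : ℂ) ∈ (fun x : ℝ => (x : ℂ)) '' Set.Icc a b :=
      Set.mem_image_of_mem _ x.2
    have h1 : ‖iteratedDeriv k f (x : ℝ) - u (x : ℝ)‖ < ε/2 := hk _ hx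
    have h2 : dist (h x) (g x) < ε/2 := by
      have := Metric.mem_ball.mp hball
      rw [ContinuousMap.dist_lt_iff (by linarith : (0:ℝ) < ε/2)] at this
      exact this x
    calc dist (iteratedDeriv k f (x : ℝ)) (g x)
        ≤ dist (iteratedDeriv k f (x : ℝ)) (h x) + dist (h x) (g x) := dist_triangle _ _ _
      _ < ε/2 + ε/2 := by
          refine add_lt_add ?_ h2
          rw [hgu x, dist_eq_norm]
          exact h1
      _ = ε := by ring
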